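/- Let Nt, Nr ∈ ℕ, 0 ≤ r < min(Nt,Nr), and define Δ(r) = (Nt−r)(Nr−r)/(2(Nt+Nr−2r)). Then for any nonnegative integers T ≥ 1 and m, with L = T + m and s = L·r + m·Δ(r), one has L·(Nt − s/L)·(Nr − s/L) ≥ T·(Nt−r)(Nr−r) + (m/2)·(Nt−r)(Nr−r). -/

import Mathlib

/-- With the rate offset `Δ(r) = (Nt−r)(Nr−r)/(2(Nt+Nr−2r))`, a parallel channel with
`L = T + m` blocks and total multiplexing gain `s = L·r + m·Δ(r)` has diversity
exponent `L·(Nt − s/L)(Nr − s/L)` at least `T·(Nt−r)(Nr−r) + (m/2)·(Nt−r)(Nr−r)`. -/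
theorem stmt2 (Nt Nr : ℕ) (r : ℝ) (hr0 : 0 ≤ r) (hr : r < min (Nt : ℝ) (Nr : ℝ))
    (T m : ℕ) (hT : 1 ≤ T) (L : ℕ) (hL : L = T + m) (s : ℝ)
    (hs : s = (L : ℝ) * r + (m : ℝ) *
      (((Nt : ℝ) - r) * ((Nr : ℝ) - r) / (2 * ((Nt : ℝ) + (Nr : ℝ) - 2 * r)))) :
    (T : ℝ) * (((Nt : ℝ) - r) * ((Nr : ℝ) - r)) +
      ((m : ℝ) / 2) * (((Nt : ℝ) - r) * ((Nr : ℝ) - r)) ≤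
    (L : ℝ) * (((Nt : ℝ) - s / L) * ((Nr : ℝ) - s / L)) := by
  have ha : 0 < (Nt : ℝ) - r := by
    have := lt_of_lt_of_le hr (min_le_left _ _); linarith
  have hb : 0 < (Nr : ℝ) - r := by
    have := lt_of_lt_of_le hr (min_le_right _ _); linarith
  have hab : 0 < (Nt : ℝ) + (Nr : ℝ) - 2 * r := by linarith
  have hLpos : (0 : ℝ) < (L : ℝ) := by
    have : 1 ≤ L := by omega
    exact_mod_cast Nat.lt_of_lt_of_le Nat.zero_lt_one this
  have hLeq : (L : ℝ) = (T : ℝ) + (m : ℝ) := by exact_mod_cast congrArg Nat.cast hL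
  have hm : (0 : ℝ) ≤ (m : ℝ) := Nat.cast_nonneg m
  subst hs
  have key : ∀ x : ℝ, ((L:ℝ) * r + (m:ℝ) * x) / L = r + (m:ℝ) * x / L := by
    intro x; field_simp
  rw [key]
  set Δ := ((Nt : ℝ) - r) * ((Nr : ℝ) - r) / (2 * ((Nt : ℝ) + (Nr : ℝ) - 2 * r)) with hΔ
  have hΔeq : Δ * (2 * ((Nt : ℝ) + (Nr : ℝ) - 2 * r)) = ((Nt : ℝ) - r) * ((Nr : ℝ) - r) := by
    rw [hΔ]; field_simp
    exact div_self (by linarith)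
  have hc : 0 ≤ (m : ℝ) * Δ / L := by
    apply div_nonneg _ hLpos.le
    apply mul_nonneg hm
    rw [hΔ]; positivity
  have expand : (L : ℝ) * (((Nt : ℝ) - (r + (m:ℝ) * Δ / L)) * ((Nr : ℝ) - (r + (m:ℝ) * Δ / L)))
      = (L : ℝ) * (((Nt:ℝ) - r) * ((Nr:ℝ) - r)) - (m:ℝ) * Δ * ((Nt:ℝ) + (Nr:ℝ) - 2*r)
        + (L:ℝ) * ((m:ℝ) * Δ / L) ^ 2 := by
    field_simp; ring
  rw [expand]
  have h2 : (m:ℝ) * Δ * ((Nt:ℝ) + (Nr:ℝ) - 2*r) = (m:ℝ) / 2 * (((Nt:ℝ) - r) * ((Nr:ℝ) - r)) := by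
    have := hΔeq; nlinarith [hΔeq]
  rw [h2]
  have hsq : 0 ≤ (L:ℝ) * ((m:ℝ) * Δ / L) ^ 2 := by positivity
  nlinarith [mul_pos ha hb]
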